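/- Let G be a finite simple graph on a vertex set V and let u ∈ V. Let G' be the simple graph on the vertex set V ⊕ {v, w} (two new vertices v and w) whose edges are exactly the edges of G together with the edge {u, v} and the edge {v, w}. Then c_0(G') − c_1(G') = 2·(c_0(G) − c_1(G)); in particular, if G is net-zero then G' is net-zero. -/

import Mathlib

attribute [local instance] Classical.propDecidable

/-- The number of 2-colorings (`1` = black) of the vertices of `G` for which the
number of black-black edges is even. -/
noncomputable def colEven {V : Type*} [Fintype V] (G : SimpleGraph V) : ℕ :=
  (Finset.univ.filter fun x : V → Fin 2 =>
    Even (G.edgeFinset.filter fun e => ∀ v ∈ e, x v = 1).card).card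

/-- The number of 2-colorings of the vertices of `G` for which the
number of black-black edges is odd. -/
noncomputable def colOdd {V : Type*} [Fintype V] (G : SimpleGraph V) : ℕ :=
  (Finset.univ.filter fun x : V → Fin 2 =>
    Odd (G.edgeFinset.filter fun e => ∀ v ∈ e, x v = 1).card).card

open Finset

noncomputable def bbAux {V : Type*} [Fintype V] (G : SimpleGraph V) (x : V → Fin 2) : ℕ :=
  (G.edgeFinset.filter fun e => ∀ v ∈ e, x v = 1).card

lemma signsum_eq {V : Type*} [Fintype V] [ftV : Fintype (V → Fin 2)] (G : SimpleGraph V) :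
    (∑ x : V → Fin 2, (-1 : ℤ) ^ bbAux G x) = (colEven G : ℤ) - colOdd G := by
  have hft : ftV = Pi.instFintype := Subsingleton.elim _ _
  subst hft
  rw [← Finset.sum_filter_add_sum_filter_not Finset.univ (fun x => Even (bbAux G x))]
  rw [Finset.sum_congr rfl (fun x hx => (Finset.mem_filter.1 hx).2.neg_one_pow),
      Finset.sum_congr rfl
        (fun x hx => (Nat.not_even_iff_odd.1 (Finset.mem_filter.1 hx).2).neg_one_pow)]
  simp only [Finset.sum_const, nsmul_eq_mul, mul_one, mul_neg_one, colEven, colOdd, bbAux,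
    ← Nat.not_even_iff_odd]
  ring_nf
  congr!

lemma innerSum2 (c : Fin 2) :
    (∑ y : Fin 2 → Fin 2, (-1 : ℤ) ^
      ((if c = 1 ∧ y 0 = 1 then 1 else 0) + (if y 0 = 1 ∧ y 1 = 1 then 1 else 0))) = 2 := by
  rw [Fintype.sum_equiv (piFinTwoEquiv fun _ => Fin 2)
    (fun y : Fin 2 → Fin 2 => (-1:ℤ) ^ ((if c = 1 ∧ y 0 = 1 then 1 else 0)
        + (if y 0 = 1 ∧ y 1 = 1 then 1 else 0)))
    (fun p => (-1:ℤ) ^ ((if c = 1 ∧ p.1 = 1 then 1 else 0)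
        + (if p.1 = 1 ∧ p.2 = 1 then 1 else 0)))
    (fun y => rfl)]
  rw [Fintype.sum_prod_type]
  fin_cases c <;>
    simp [Fin.sum_univ_two, show ((0 : Fin 2) = 1) = False by simp,
      show ((1 : Fin 2) = 1) = True by simp]

lemma bb_G' {V : Type*} [Fintype V] (G : SimpleGraph V) (u : V)
    (G' : SimpleGraph (V ⊕ Fin 2))
    (hG' : G' = SimpleGraph.fromEdgeSet
      ((Sym2.map Sum.inl '' G.edgeSet) ∪
        {s(Sum.inl u, Sum.inr 0), s(Sum.inr 0, Sum.inr 1)}))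
    (x : V ⊕ Fin 2 → Fin 2) :
    bbAux G' x = bbAux G (x ∘ Sum.inl)
      + ((if x (Sum.inl u) = 1 ∧ x (Sum.inr 0) = 1 then 1 else 0)
      + (if x (Sum.inr 0) = 1 ∧ x (Sum.inr 1) = 1 then 1 else 0)) := by
  set e1 : Sym2 (V ⊕ Fin 2) := s(Sum.inl u, Sum.inr 0) with he1
  set e2 : Sym2 (V ⊕ Fin 2) := s(Sum.inr 0, Sum.inr 1) with he2
  have hinj : Function.Injective (Sym2.map (Sum.inl : V → V ⊕ Fin 2)) :=
    Sym2.map.injective Sum.inl_injective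
  have hedge : ∀ e, e ∈ G'.edgeFinset ↔
      ((∃ e0 ∈ G.edgeFinset, Sym2.map Sum.inl e0 = e) ∨ e = e1 ∨ e = e2) := by
    intro e
    rw [SimpleGraph.mem_edgeFinset, hG', SimpleGraph.edgeSet_fromEdgeSet]
    simp only [Set.mem_diff, Set.mem_union, Set.mem_image, Set.mem_insert_iff,
      Set.mem_singleton_iff, Set.mem_setOf_eq, SimpleGraph.mem_edgeFinset]
    constructor
    · rintro ⟨h, -⟩; exact h
    · intro h
      refine ⟨h, ?_⟩
      rcases h with ⟨e', he', rfl⟩ | rfl | rfl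
      · rw [Sym2.mem_diagSet, Sym2.isDiag_map Sum.inl_injective]
        exact G.not_isDiag_of_mem_edgeSet he'
      · simp [he1, Sym2.mk_isDiag_iff]
      · simp [he2, Sym2.mk_isDiag_iff]
  have hnotimg : ∀ e0 : Sym2 V, Sym2.map Sum.inl e0 ≠ e1 ∧ Sym2.map Sum.inl e0 ≠ e2 := by
    intro e0
    constructor <;> intro heq
    · have h0 : (Sum.inr 0 : V ⊕ Fin 2) ∈ Sym2.map Sum.inl e0 := by rw [heq, he1]; simp
      rcases Sym2.mem_map.1 h0 with ⟨a, -, ha⟩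
      exact absurd ha (by simp)
    · have h0 : (Sum.inr 0 : V ⊕ Fin 2) ∈ Sym2.map Sum.inl e0 := by rw [heq, he2]; simp
      rcases Sym2.mem_map.1 h0 with ⟨a, -, ha⟩
      exact absurd ha (by simp)
  have hne12 : e1 ≠ e2 := by
    simp [he1, he2, Sym2.eq_iff]
  have hp1 : (∀ v ∈ e1, x v = 1) ↔ (x (Sum.inl u) = 1 ∧ x (Sum.inr 0) = 1) := by
    rw [he1]; exact Sym2.forall_mem_pair
  have hp2 : (∀ v ∈ e2, x v = 1) ↔ (x (Sum.inr 0) = 1 ∧ x (Sum.inr 1) = 1) := by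
    rw [he2]; exact Sym2.forall_mem_pair
  have hsplit : G'.edgeFinset.filter (fun e => ∀ v ∈ e, x v = 1)
      = ((G.edgeFinset.filter fun e => ∀ v ∈ e, (x ∘ Sum.inl) v = 1).image
          (Sym2.map Sum.inl))
        ∪ (({e1, e2} : Finset _).filter fun e => ∀ v ∈ e, x v = 1) := by
    ext e
    simp only [Finset.mem_filter, Finset.mem_union, Finset.mem_image, Finset.mem_insert,
      Finset.mem_singleton, hedge]
    constructor
    · rintro ⟨⟨e0, he0, rfl⟩ | rfl | rfl, hP⟩
      · exact Or.inl ⟨e0, ⟨he0, fun v hv => hP _ (Sym2.mem_map.2 ⟨v, hv, rfl⟩)⟩, rfl⟩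
      · exact Or.inr ⟨Or.inl rfl, hP⟩
      · exact Or.inr ⟨Or.inr rfl, hP⟩
    · rintro (⟨e0, ⟨he0, hP⟩, rfl⟩ | ⟨h12, hP⟩)
      · refine ⟨Or.inl ⟨e0, he0, rfl⟩, fun v hv => ?_⟩
        rcases Sym2.mem_map.1 hv with ⟨a, ha, rfl⟩
        exact hP a ha
      · exact ⟨Or.inr h12, hP⟩
  have hdisj : Disjoint
      ((G.edgeFinset.filter fun e => ∀ v ∈ e, (x ∘ Sum.inl) v = 1).image (Sym2.map Sum.inl))
      (({e1, e2} : Finset (Sym2 (V ⊕ Fin 2))).filter fun e => ∀ v ∈ e, x v = 1) := by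
    rw [Finset.disjoint_left]
    intro e he h'
    rcases Finset.mem_image.1 he with ⟨e0, -, rfl⟩
    rcases Finset.mem_insert.1 (Finset.mem_filter.1 h').1 with h | h
    · exact (hnotimg e0).1 h
    · exact (hnotimg e0).2 (Finset.mem_singleton.1 h)
  have hA : ((G.edgeFinset.filter fun e => ∀ v ∈ e, (x ∘ Sum.inl) v = 1).card)
      = bbAux G (x ∘ Sum.inl) := by
    unfold bbAux
    refine congrArg Finset.card (Finset.ext fun e => ?_)
    simp only [Finset.mem_filter, SimpleGraph.mem_edgeFinset]
  have hpair : (({e1, e2} : Finset (Sym2 (V ⊕ Fin 2))).filter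
        fun e => ∀ v ∈ e, x v = 1).card
      = ((if x (Sum.inl u) = 1 ∧ x (Sum.inr 0) = 1 then 1 else 0)
        + (if x (Sum.inr 0) = 1 ∧ x (Sum.inr 1) = 1 then 1 else 0)) := by
    rw [show ({e1, e2} : Finset (Sym2 (V ⊕ Fin 2))) = insert e1 {e2} from rfl,
      Finset.filter_insert, Finset.filter_singleton]
    by_cases h1 : ∀ v ∈ e1, x v = 1 <;> by_cases h2 : ∀ v ∈ e2, x v = 1
    · rw [if_pos h1, if_pos h2, if_pos (hp1.1 h1), if_pos (hp2.1 h2),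
        Finset.card_insert_of_notMem (by simp [hne12]), Finset.card_singleton]
    · rw [if_pos h1, if_neg h2, if_pos (hp1.1 h1), if_neg (fun hc => h2 (hp2.2 hc)),
        Finset.card_insert_of_notMem (by simp), Finset.card_empty]
    · rw [if_neg h1, if_pos h2, if_neg (fun hc => h1 (hp1.2 hc)), if_pos (hp2.1 h2),
        Finset.card_singleton]
    · rw [if_neg h1, if_neg h2, if_neg (fun hc => h1 (hp1.2 hc)),
        if_neg (fun hc => h2 (hp2.2 hc)), Finset.card_empty]
  have hbb : bbAux G' x = (G'.edgeFinset.filter fun e => ∀ v ∈ e, x v = 1).card := by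
    unfold bbAux
    refine congrArg Finset.card (Finset.ext fun e => ?_)
    simp only [Finset.mem_filter, SimpleGraph.mem_edgeFinset]
  rw [hbb, hsplit, Finset.card_union_of_disjoint hdisj,
    Finset.card_image_of_injective _ hinj, hA, hpair]

theorem stmt_16 {V : Type*} [Fintype V] (G : SimpleGraph V) (u : V)
    (G' : SimpleGraph (V ⊕ Fin 2))
    (hG' : G' = SimpleGraph.fromEdgeSet
      ((Sym2.map Sum.inl '' G.edgeSet) ∪
        {s(Sum.inl u, Sum.inr 0), s(Sum.inr 0, Sum.inr 1)})) :
    (colEven G' : ℤ) - colOdd G' = 2 * ((colEven G : ℤ) - colOdd G) ∧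
    (colEven G = colOdd G → colEven G' = colOdd G') := by
  have key : (colEven G' : ℤ) - colOdd G' = 2 * ((colEven G : ℤ) - colOdd G) := by
    rw [← signsum_eq, ← signsum_eq]
    have h1 : ∀ (x : V → Fin 2) (y : Fin 2 → Fin 2),
        (-1:ℤ) ^ bbAux G' (Sum.elim x y)
          = (-1:ℤ) ^ bbAux G x *
            (-1:ℤ) ^ ((if x u = 1 ∧ y 0 = 1 then 1 else 0)
              + (if y 0 = 1 ∧ y 1 = 1 then 1 else 0)) := by
      intro x y
      rw [bb_G' G u G' hG', pow_add]
      simp [Sum.elim_comp_inl]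
      rfl
    calc (∑ x : V ⊕ Fin 2 → Fin 2, (-1:ℤ) ^ bbAux G' x)
        = ∑ p : (V → Fin 2) × (Fin 2 → Fin 2), (-1:ℤ) ^ bbAux G' (Sum.elim p.1 p.2) := by
          exact (Fintype.sum_equiv ((Equiv.sumArrowEquivProdArrow V (Fin 2) (Fin 2)).symm)
            _ _ (fun p => rfl)).symm
      _ = ∑ x : V → Fin 2, ∑ y : Fin 2 → Fin 2, (-1:ℤ) ^ bbAux G' (Sum.elim x y) :=
          Fintype.sum_prod_type _
      _ = ∑ x : V → Fin 2, ((-1:ℤ) ^ bbAux G x) * 2 := by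
          refine Finset.sum_congr rfl fun x _ => ?_
          rw [Finset.sum_congr rfl fun y _ => h1 x y, ← Finset.mul_sum, innerSum2 (x u)]
      _ = 2 * ∑ x : V → Fin 2, (-1:ℤ) ^ bbAux G x := by
          rw [← Finset.sum_mul, mul_comm]
  refine ⟨key, fun h => ?_⟩
  have : (colEven G' : ℤ) = colOdd G' := by
    rw [h] at key; omega
  exact_mod_cast this
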